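/- Let θ ∈ (0,1) and define f(s) = 1/(e^{θ s} + e^{(θ−1)s}) for s ∈ ℝ. Then f is integrable on ℝ and its Fourier transform is f̂(ξ) = π / sin(π(θ + 2πiξ)) for all ξ ∈ ℝ. -/

import Mathlib

open Real Complex MeasureTheory

noncomputable def gmap (x : ℝ) : ℝ := Real.log (1 - x) - Real.log x
noncomputable def gd (x : ℝ) : ℝ := -(1/(x*(1-x)))

lemma ptwise (z : ℂ) {x : ℝ} (hx : x ∈ Set.Ioo (0:ℝ) 1) :
    |gd x| • (Complex.exp (-z * (gmap x : ℝ)) / (1 + (Real.exp (-(gmap x)) : ℂ)))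
      = (x:ℂ) ^ (z-1) * (1-(x:ℂ)) ^ ((1-z)-1) := by
  have hx0 : (0:ℝ) < x := hx.1
  have h1x : (0:ℝ) < 1 - x := by linarith [hx.2]
  have hxC : (x:ℂ) ≠ 0 := by exact_mod_cast hx0.ne'
  have h1xC : (1:ℂ) - (x:ℂ) ≠ 0 := by
    have : ((1-x:ℝ):ℂ) ≠ 0 := by exact_mod_cast h1x.ne'
    push_cast at this; exact this
  have hgd : |gd x| = 1/(x*(1-x)) := by
    unfold gd
    rw [abs_neg, abs_of_pos (by positivity)]
  -- denominator
  have hDr : (1:ℝ) + Real.exp (-(gmap x)) = (1-x)⁻¹ := by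
    have h : Real.exp (-(gmap x)) = x/(1-x) := by
      unfold gmap
      rw [neg_sub, Real.exp_sub, Real.exp_log hx0, Real.exp_log h1x]
    rw [h]; field_simp; ring
  -- cpow to exp
  have hxz : ∀ w : ℂ, (x:ℂ) ^ w = Complex.exp ((Real.log x : ℂ) * w) := by
    intro w
    rw [Complex.cpow_def_of_ne_zero hxC, Complex.ofReal_log hx0.le]
  have h1xz : ∀ w : ℂ, (1-(x:ℂ)) ^ w = Complex.exp ((Real.log (1-x) : ℂ) * w) := by
    intro w
    have : (1-(x:ℂ)) = ((1-x:ℝ):ℂ) := by push_cast; ring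
    rw [this, Complex.cpow_def_of_ne_zero (by exact_mod_cast h1x.ne'),
      Complex.ofReal_log h1x.le]
  have hE : Complex.exp (-z * (gmap x : ℝ)) =
      Complex.exp ((Real.log x : ℂ) * z) * (Complex.exp ((Real.log (1-x) : ℂ) * z))⁻¹ := by
    rw [← Complex.exp_neg, ← Complex.exp_add]
    congr 1
    unfold gmap
    push_cast
    ring
  rw [hgd, hE, hxz, h1xz, Complex.real_smul]
  rw [show ((1:ℂ) + (Real.exp (-(gmap x)) : ℂ)) = (((1 + Real.exp (-(gmap x)) : ℝ)) : ℂ) by push_cast; ring, hDr]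
  have e1 := Complex.exp_ne_zero ((Real.log x : ℂ) * z)
  have e2 := Complex.exp_ne_zero ((Real.log (1-x) : ℂ) * z)
  have h3 : Complex.exp ((Real.log x : ℂ) * (z-1))
      = Complex.exp ((Real.log x : ℂ) * z) / (x:ℂ) := by
    rw [show (Real.log x : ℂ) * (z-1) = (Real.log x : ℂ) * z - (Real.log x : ℂ) by ring,
      Complex.exp_sub, ← Complex.ofReal_exp, Real.exp_log hx0]
  have h4 : Complex.exp ((Real.log (1-x) : ℂ) * (1-z-1))
      = (Complex.exp ((Real.log (1-x) : ℂ) * z))⁻¹ := by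
    rw [← Complex.exp_neg]
    congr 1
    ring
  rw [h3, h4]
  push_cast
  field_simp

lemma gmap_image : gmap '' Set.Ioo 0 1 = Set.univ := by
  ext t
  simp only [Set.mem_image, Set.mem_univ, iff_true]
  have h1 : (0:ℝ) < 1 + Real.exp t := by positivity
  refine ⟨1 / (1 + Real.exp t), ⟨by positivity, ?_⟩, ?_⟩
  · rw [div_lt_one h1]; linarith [Real.exp_pos t]
  · unfold gmap
    have h2 : 1 - 1/(1+Real.exp t) = Real.exp t / (1+Real.exp t) := by field_simp; ring
    rw [h2, Real.log_div (by positivity) h1.ne', Real.log_div one_ne_zero h1.ne',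
      Real.log_exp, Real.log_one]
    ring

lemma gmap_hasDeriv {x : ℝ} (hx : x ∈ Set.Ioo (0:ℝ) 1) : HasDerivAt gmap (gd x) x := by
  have hx0 : (0:ℝ) < x := hx.1
  have h1x : (0:ℝ) < 1 - x := by linarith [hx.2]
  have h1 : HasDerivAt (fun y : ℝ => 1 - y) (-1) x := (hasDerivAt_id x).const_sub 1
  have h2 : HasDerivAt (fun y : ℝ => Real.log (1 - y)) (-1 / (1-x)) x := h1.log h1x.ne'
  have h3 : HasDerivAt Real.log x⁻¹ x := Real.hasDerivAt_log hx0.ne'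
  have := h2.sub h3
  refine this.congr_deriv ?_
  unfold gd
  field_simp
  ring

lemma gmap_inj : Set.InjOn gmap (Set.Ioo 0 1) := by
  have e : ∀ c ∈ Set.Ioo (0:ℝ) 1, Real.exp (gmap c) = (1-c)/c := by
    intro c hc
    unfold gmap
    rw [Real.exp_sub, Real.exp_log (by linarith [hc.2]), Real.exp_log hc.1]
  intro a ha b hb hab
  have ea : (1-a)/a = (1-b)/b := by rw [← e a ha, ← e b hb, hab]
  have ha0 := ha.1; have hb0 := hb.1
  field_simp at ea
  nlinarith [ea]

lemma key (z : ℂ) (h0 : 0 < z.re) (h1 : z.re < 1) :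
    MeasureTheory.Integrable (fun s : ℝ => Complex.exp (-z * s) / (1 + Real.exp (-s))) ∧
    (∫ s : ℝ, Complex.exp (-z * s) / (1 + Real.exp (-s))) = ↑π / Complex.sin (π * z) := by
  have h1' : 0 < (1 - z).re := by simp [Complex.sub_re]; linarith
  have hmeas : MeasurableSet (Set.Ioo (0:ℝ) 1) := measurableSet_Ioo
  have hderiv : ∀ x ∈ Set.Ioo (0:ℝ) 1, HasDerivWithinAt gmap (gd x) (Set.Ioo 0 1) x :=
    fun x hx => (gmap_hasDeriv hx).hasDerivWithinAt
  have hpt : Set.EqOn (fun x : ℝ => |gd x| • ((fun s : ℝ => Complex.exp (-z * s) / (1 + Real.exp (-s))) (gmap x)))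
      (fun x : ℝ => (x:ℂ) ^ (z-1) * (1-(x:ℂ)) ^ ((1-z)-1)) (Set.Ioo 0 1) :=
    fun x hx => ptwise z hx
  have hbeta_int : IntegrableOn (fun x : ℝ => (x:ℂ) ^ (z-1) * (1-(x:ℂ)) ^ ((1-z)-1)) (Set.Ioo 0 1) := by
    have h := (Complex.betaIntegral_convergent h0 h1')
    rw [intervalIntegrable_iff] at h
    exact (h.mono_set (by rw [Set.uIoc_of_le zero_le_one]; exact Set.Ioo_subset_Ioc_self))
  constructor
  · rw [← integrableOn_univ, ← gmap_image,
      integrableOn_image_iff_integrableOn_abs_deriv_smul hmeas hderiv gmap_inj]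
    exact hbeta_int.congr_fun (fun x hx => (hpt hx).symm) hmeas
  · rw [← setIntegral_univ, ← gmap_image,
      integral_image_eq_integral_abs_deriv_smul hmeas hderiv gmap_inj,
      setIntegral_congr_fun hmeas hpt]
    have hbv : (∫ x in Set.Ioo (0:ℝ) 1, (x:ℂ) ^ (z-1) * (1-(x:ℂ)) ^ ((1-z)-1))
        = Complex.betaIntegral z (1-z) := by
      rw [Complex.betaIntegral, intervalIntegral.integral_of_le zero_le_one,
        MeasureTheory.integral_Ioc_eq_integral_Ioo]
    rw [hbv]
    have hg := Complex.Gamma_mul_Gamma_eq_betaIntegral h0 h1'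
    rw [show z + (1 - z) = 1 by ring, Complex.Gamma_one, one_mul] at hg
    rw [← hg, Complex.Gamma_mul_Gamma_one_sub]

lemma ptw2 (θ s ξ : ℝ) :
    (1 : ℂ) / (Real.exp (θ * s) + Real.exp ((θ - 1) * s)) * Complex.exp (-(2 * π * Complex.I * ξ * s))
      = Complex.exp (-((θ:ℂ) + 2 * π * Complex.I * ξ) * s) / (1 + Real.exp (-s)) := by
  have hA : ((Real.exp (θ * s) : ℂ) + (Real.exp ((θ - 1) * s) : ℂ)) ≠ 0 := by
    have : (0:ℝ) < Real.exp (θ * s) + Real.exp ((θ - 1) * s) := by positivity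
    exact_mod_cast this.ne'
  have hB : ((1 : ℂ) + (Real.exp (-s) : ℂ)) ≠ 0 := by
    have : (0:ℝ) < 1 + Real.exp (-s) := by positivity
    have h2 : ((1 + Real.exp (-s) : ℝ) : ℂ) ≠ 0 := by exact_mod_cast this.ne'
    rw [Complex.ofReal_add, Complex.ofReal_one] at h2; exact h2
  rw [one_div, inv_mul_eq_div, div_eq_div_iff hA hB]
  have hEA : Complex.exp (-((θ:ℂ) + 2 * π * Complex.I * ξ) * s) * (Real.exp (θ * s) : ℂ)
      = Complex.exp (-(2 * π * Complex.I * ξ * s)) := by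
    rw [Complex.ofReal_exp, ← Complex.exp_add]
    congr 1; push_cast; ring
  have hEB : Complex.exp (-((θ:ℂ) + 2 * π * Complex.I * ξ) * s) * (Real.exp ((θ - 1) * s) : ℂ)
      = Complex.exp (-(2 * π * Complex.I * ξ * s)) * (Real.exp (-s) : ℂ) := by
    rw [Complex.ofReal_exp, Complex.ofReal_exp, ← Complex.exp_add, ← Complex.exp_add]
    congr 1; push_cast; ring
  linear_combination (-1 : ℂ) * hEA - hEB

theorem stmt_2 (θ : ℝ) (hθ : θ ∈ Set.Ioo (0 : ℝ) 1)
    (f : ℝ → ℂ)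
    (hf : ∀ s : ℝ, f s = 1 / (Real.exp (θ * s) + Real.exp ((θ - 1) * s))) :
    MeasureTheory.Integrable f ∧
    ∀ ξ : ℝ, (∫ s : ℝ, f s * Complex.exp (-(2 * π * Complex.I * ξ * s)))
      = π / Complex.sin (π * (θ + 2 * π * Complex.I * ξ)) := by
  have hre : ∀ ξ : ℝ, ((θ:ℂ) + 2 * π * Complex.I * ξ).re = θ := by intro ξ; simp
  have hkey : ∀ ξ : ℝ, Integrable (fun s : ℝ =>
      Complex.exp (-((θ:ℂ) + 2 * π * Complex.I * ξ) * s) / (1 + Real.exp (-s))) ∧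
      (∫ s : ℝ, Complex.exp (-((θ:ℂ) + 2 * π * Complex.I * ξ) * s) / (1 + Real.exp (-s)))
        = ↑π / Complex.sin (π * ((θ:ℂ) + 2 * π * Complex.I * ξ)) := by
    intro ξ
    exact key _ (by rw [hre]; exact hθ.1) (by rw [hre]; exact hθ.2)
  have hfun : ∀ ξ : ℝ, (fun s : ℝ => f s * Complex.exp (-(2 * π * Complex.I * ξ * s)))
      = fun s : ℝ => Complex.exp (-((θ:ℂ) + 2 * π * Complex.I * ξ) * s) / (1 + Real.exp (-s)) := by
    intro ξ; funext s; rw [hf s, ptw2]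
  constructor
  · have h0 := (hkey 0).1
    rw [← hfun 0] at h0
    refine h0.congr (Filter.Eventually.of_forall fun s => ?_)
    simp
  · intro ξ
    rw [show (∫ s : ℝ, f s * Complex.exp (-(2 * π * Complex.I * ξ * s)))
        = ∫ s : ℝ, Complex.exp (-((θ:ℂ) + 2 * π * Complex.I * ξ) * s) / (1 + Real.exp (-s)) by
      rw [← hfun ξ]]
    exact (hkey ξ).2
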